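/- Let ν be a probability measure on a measurable space Ω, let 0 ≤ a < b < ∞, and let L : Ω → ℝ be a measurable function with a ≤ L(ω) ≤ b for all ω. Then log(∫ e^{L} dν) − ∫ L dν ≤ 2·log((e^a + e^b)/2) − a − b. -/

import Mathlib

open MeasureTheory Real

/-- **Key intermediate step in the proof of Theorem 1 of the paper.**
For a probability measure `ν` and a measurable loss `L` with values in `[a, b]`, `0 ≤ a < b`,
the Jensen gap of the exponential satisfies
`log(∫ e^L dν) − ∫ L dν ≤ 2 log((eᵃ + eᵇ)/2) − a − b`. -/
theorem log_integral_exp_sub_integral_le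
    {Ω : Type*} [MeasurableSpace Ω] (ν : Measure Ω) [IsProbabilityMeasure ν]
    (a b : ℝ) (ha : 0 ≤ a) (hab : a < b)
    (L : Ω → ℝ) (hL : Measurable L) (hLa : ∀ ω, a ≤ L ω) (hLb : ∀ ω, L ω ≤ b) :
    Real.log (∫ ω, Real.exp (L ω) ∂ν) - ∫ ω, L ω ∂ν ≤
      2 * Real.log ((Real.exp a + Real.exp b) / 2) - a - b := by
  set p := Real.exp a with hpdef
  set q := Real.exp b with hqdef
  have hpq : p < q := Real.exp_lt_exp.2 hab
  have hp0 : 0 < p := Real.exp_pos a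
  have hq0 : 0 < q := Real.exp_pos b
  set s : ℝ := (b - a) / (q - p) with hsdef
  -- chord bound: log lies above its chord on [p, q]
  have chord : ∀ x, p ≤ x → x ≤ q → a + s * (x - p) ≤ Real.log x := by
    intro x hx1 hx2
    have hconc := strictConcaveOn_log_Ioi.concaveOn
    have hqp : (0:ℝ) < q - p := by linarith
    have ht : (q - x)/(q - p) + (x - p)/(q - p) = 1 := by field_simp; ring
    have h2 := hconc.2 (Set.mem_Ioi.2 hp0) (Set.mem_Ioi.2 hq0)
      (div_nonneg (by linarith) hqp.le)
      (div_nonneg (by linarith) hqp.le) ht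
    rw [smul_eq_mul, smul_eq_mul, smul_eq_mul, smul_eq_mul] at h2
    have hx : (q - x)/(q - p) * p + (x - p)/(q - p) * q = x := by field_simp; ring
    rw [hx] at h2
    have hlp : Real.log p = a := by rw [hpdef, Real.log_exp]
    have hlq : Real.log q = b := by rw [hqdef, Real.log_exp]
    rw [hlp, hlq] at h2
    have : (q - x)/(q - p) * a + (x - p)/(q - p) * b = a + s * (x - p) := by
      rw [hsdef]; field_simp; ring
    linarith [h2, this.ge, this.le]
  -- integrability
  have hintL : Integrable L ν := by
    apply Integrable.mono' (integrable_const b) hL.aestronglyMeasurable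
    filter_upwards with ω
    rw [Real.norm_eq_abs, abs_le]
    exact ⟨by linarith [hLa ω, Real.exp_pos a], hLb ω⟩
  have hintE : Integrable (fun ω => Real.exp (L ω)) ν := by
    apply Integrable.mono' (integrable_const q) (hL.exp.aestronglyMeasurable)
    filter_upwards with ω
    rw [Real.norm_eq_abs, abs_le]
    exact ⟨by linarith [(Real.exp_pos (L ω)).le], Real.exp_le_exp.2 (hLb ω)⟩
  set m := ∫ ω, Real.exp (L ω) ∂ν with hmdef
  have hmp : p ≤ m := by
    have : ∫ (_ : Ω), p ∂ν = p := by simp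
    rw [hmdef, ← this]
    exact integral_mono (integrable_const p) hintE fun ω => Real.exp_le_exp.2 (hLa ω)
  have hmq : m ≤ q := by
    have : ∫ (_ : Ω), q ∂ν = q := by simp
    rw [hmdef, ← this]
    exact integral_mono hintE (integrable_const q) fun ω => Real.exp_le_exp.2 (hLb ω)
  -- Step B: ∫ L ≥ chord(m)
  have hB : a + s * (m - p) ≤ ∫ ω, L ω ∂ν := by
    have heq : ∫ ω, ((a - s * p) + s * Real.exp (L ω)) ∂ν = a + s * (m - p) := by
      rw [integral_add (integrable_const (a - s * p)) (hintE.const_mul s),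
        integral_const_mul, integral_const]
      simp [hmdef]; ring
    rw [← heq]
    refine integral_mono ((integrable_const (a - s * p)).add (hintE.const_mul s)) hintL
      fun ω => ?_
    have := chord (Real.exp (L ω)) (Real.exp_le_exp.2 (hLa ω)) (Real.exp_le_exp.2 (hLb ω))
    rw [Real.log_exp] at this
    linarith
  -- reflection point
  set m' := p + q - m with hm'def
  have hm'p : p ≤ m' := by rw [hm'def]; linarith
  have hm'q : m' ≤ q := by rw [hm'def]; linarith
  have hm0 : 0 < m := lt_of_lt_of_le hp0 hmp
  have hm'0 : 0 < m' := lt_of_lt_of_le hp0 hm'p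
  have hchord' : a + s * (m' - p) ≤ Real.log m' := chord m' hm'p hm'q
  -- midpoint concavity via AM-GM
  have key : Real.log m + Real.log m' ≤ 2 * Real.log ((p + q) / 2) := by
    have hmm' : m * m' ≤ ((p + q) / 2) ^ 2 := by
      have : m + m' = p + q := by rw [hm'def]; ring
      nlinarith [sq_nonneg (m - m')]
    calc Real.log m + Real.log m' = Real.log (m * m') := (Real.log_mul hm0.ne' hm'0.ne').symm
      _ ≤ Real.log (((p + q) / 2) ^ 2) :=
          Real.log_le_log (by positivity) hmm'
      _ = 2 * Real.log ((p + q) / 2) := by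
          rw [Real.log_pow]; push_cast; ring
  have hsq : s * (q - p) = b - a := by
    rw [hsdef, div_mul_eq_mul_div, mul_div_assoc,
      div_self (by linarith : q - p ≠ 0), mul_one]
  have hsum : s * (m - p) + s * (m' - p) = b - a := by
    have h : (m - p) + (m' - p) = q - p := by rw [hm'def]; ring
    linear_combination hsq + s * h
  calc Real.log m - ∫ ω, L ω ∂ν ≤ Real.log m - (a + s * (m - p)) := by linarith
    _ ≤ (Real.log m - (a + s * (m - p))) + (Real.log m' - (a + s * (m' - p))) := by linarith
    _ = Real.log m + Real.log m' - 2 * a - (s * (m - p) + s * (m' - p)) := by ring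
    _ ≤ 2 * Real.log ((p + q) / 2) - 2 * a - (b - a) := by rw [hsum]; linarith
    _ = 2 * Real.log ((Real.exp a + Real.exp b) / 2) - a - b := by rw [hpdef, hqdef]; ring
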